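/- arXiv:2307.10202 — 6 statements merged into one kernel-verified Lean document; each statement's English description precedes it below -/
import Mathlib

section
/- Let E be a connected directed graph and let α : (F, φ) → (G, ψ) be a morphism of coverings of E (i.e., φ : F → E and ψ : G → E are covering maps of graphs and α : F → G is a graph homomorphism with ψ ∘ α = φ). Then α : F → G is itself a covering map, i.e., for every vertex v of F the induced maps on the sets of edges with source v (respectively range v) are bijections onto the corresponding sets at α(v). -/
/-- A directed graph: vertices, edges, source and range maps. -/
structure DGraph where
  V : Type
  E : Type
  s : E → V
  r : E → V

/-- A homomorphism of directed graphs. -/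
structure GraphHom (F E : DGraph) where
  v : F.V → E.V
  e : F.E → E.E
  hs : ∀ f, E.s (e f) = v (F.s f)
  hr : ∀ f, E.r (e f) = v (F.r f)

def GraphHom.id (F : DGraph) : GraphHom F F where
  v := fun x => x
  e := fun x => x
  hs := fun _ => rfl
  hr := fun _ => rfl

def GraphHom.comp {F G E : DGraph} (ψ : GraphHom G E) (α : GraphHom F G) :
    GraphHom F E where
  v := ψ.v ∘ α.v
  e := ψ.e ∘ α.e
  hs f := by simp [Function.comp, ψ.hs, α.hs]
  hr f := by simp [Function.comp, ψ.hr, α.hr]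

/-- Edges of the double graph: `inl e` is `e`, `inr e` is the reversed edge `e*`. -/
abbrev DE (G : DGraph) := G.E ⊕ G.E

/-- Source of an edge of the double graph. -/
def DGraph.ds (G : DGraph) : DE G → G.V := Sum.elim G.s G.r

/-- Range of an edge of the double graph. -/
def DGraph.dr (G : DGraph) : DE G → G.V := Sum.elim G.r G.s

/-- `IsWalk G u l v` : the list `l` of double-graph edges is a walk from `u` to `v`. -/
def IsWalk (G : DGraph) : G.V → List (DE G) → G.V → Prop
  | u, [], v => u = v
  | u, x :: l, v => G.ds x = u ∧ IsWalk G (G.dr x) l v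

/-- A graph is connected if any two vertices are joined by a walk. -/
def DGraph.Connected (G : DGraph) : Prop := ∀ u v : G.V, ∃ l, IsWalk G u l v

/-- A graph homomorphism is a covering if it is bijective on the sets of edges
with a given source (resp. a given range). -/
def IsCovering {F E : DGraph} (φ : GraphHom F E) : Prop :=
  (∀ w : F.V, Set.BijOn φ.e {f | F.s f = w} {g | E.s g = φ.v w}) ∧
  (∀ w : F.V, Set.BijOn φ.e {f | F.r f = w} {g | E.r g = φ.v w})

/-- The reversal involution on double-graph edges. -/
def DGraph.bar (G : DGraph) : DE G → DE G := Sum.swap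

/-- Action of a graph homomorphism on double-graph edges. -/
def mapD {F E : DGraph} (φ : GraphHom F E) : DE F → DE E := Sum.map φ.e φ.e

/-- A walk is reduced if it contains no spur `e e*` or `e* e`. -/
def Reduced {G : DGraph} (l : List (DE G)) : Prop :=
  List.Chain' (fun x y => y ≠ G.bar x) l

open scoped Classical in
/-- The reduction of a walk, deleting spurs until none remain. -/
noncomputable def red {G : DGraph} : List (DE G) → List (DE G)
  | [] => []
  | x :: l =>
    match red l with
    | [] => [x]
    | y :: l' => if y = G.bar x then l' else x :: y :: l'

/-- A graph is a tree if between any two vertices there is exactly one reduced walk. -/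
def DGraph.IsTree (G : DGraph) : Prop :=
  ∀ u v : G.V, ∃! l : List (DE G), IsWalk G u l v ∧ Reduced l

/-- A covering is universal if it maps onto every (connected) covering. -/
def IsUniversal {F E : DGraph} (φ : GraphHom F E) : Prop :=
  ∀ (G : DGraph) (ψ : GraphHom G E), G.Connected → IsCovering ψ →
    ∃ α : GraphHom F G, ψ.comp α = φ

/-- Lemma 2.2: a morphism of coverings of a connected graph is itself a covering. -/
theorem stmt_0 {E F G : DGraph} (hE : E.Connected) (hF : F.Connected) (hG : G.Connected)
    (φ : GraphHom F E) (ψ : GraphHom G E) (α : GraphHom F G)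
    (hφ : IsCovering φ) (hψ : IsCovering ψ) (hcomm : ψ.comp α = φ) :
    IsCovering α := by
  have hv : ∀ x, ψ.v (α.v x) = φ.v x := fun x => by rw [← hcomm]; rfl
  have he : ∀ f, ψ.e (α.e f) = φ.e f := fun f => by rw [← hcomm]; rfl
  have key : ∀ (σF : F.E → F.V) (σG : G.E → G.V) (σE : E.E → E.V),
      (∀ f, σG (α.e f) = α.v (σF f)) →
      (∀ w : F.V, Set.BijOn φ.e {f | σF f = w} {g | σE g = φ.v w}) →
      (∀ w : G.V, Set.BijOn ψ.e {f | σG f = w} {g | σE g = ψ.v w}) →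
      ∀ w : F.V, Set.BijOn α.e {f | σF f = w} {g | σG g = α.v w} := by
    intro σF σG σE hα hφ' hψ' w
    have hψw := hψ' (α.v w)
    have hφw := hφ' w
    have hUeq : {g | σE g = ψ.v (α.v w)} = {g | σE g = φ.v w} := by
      simp [hv]
    rw [hUeq] at hψw
    refine ⟨fun f hf => by simp only [Set.mem_setOf_eq] at hf ⊢; rw [hα, hf], ?_, ?_⟩
    · intro a ha b hb hab
      exact hφw.injOn ha hb (by rw [← he, ← he, hab])
    · intro g hg
      have hgU : ψ.e g ∈ {g | σE g = φ.v w} := hψw.mapsTo hg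
      obtain ⟨f, hf, hfe⟩ := hφw.surjOn hgU
      refine ⟨f, hf, ?_⟩
      have h1 : α.e f ∈ {h | σG h = α.v w} := by
        simp only [Set.mem_setOf_eq] at hf ⊢; rw [hα, hf]
      exact hψw.injOn h1 hg (by rw [he, hfe])
  exact ⟨key F.s G.s E.s α.hs hφ.1 hψ.1, key F.r G.r E.r α.hr hφ.2 hψ.2⟩
end

section
/- Let (F, φ) be a representation graph for a finitely bi-separated graph Ė = (E, C, D). If q and q' are walks in F with φ(q) = φ(q') and either s(q) = s(q') or r(q) = r(q'), then q = q'. -/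
/-- A (finitely) bi-separated graph `Ed = (E, C, D)`: a directed graph `E` together with
partitions `C_v` of `s⁻¹(v)` and `D_v` of `r⁻¹(v)` into finite nonempty blocks, such
that any block of `C` meets any block of `D` in at most one edge. -/
structure BisepGraph where
  G : DGraph
  C : Set (Set G.E)
  D : Set (Set G.E)
  hCne : ∀ X ∈ C, X.Nonempty
  hDne : ∀ Y ∈ D, Y.Nonempty
  hCs : ∀ X ∈ C, ∀ e ∈ X, ∀ f ∈ X, G.s e = G.s f
  hDr : ∀ Y ∈ D, ∀ e ∈ Y, ∀ f ∈ Y, G.r e = G.r f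
  hCpart : ∀ e : G.E, ∃! X, X ∈ C ∧ e ∈ X
  hDpart : ∀ e : G.E, ∃! Y, Y ∈ D ∧ e ∈ Y
  hCfin : ∀ X ∈ C, X.Finite
  hDfin : ∀ Y ∈ D, Y.Finite
  hCD : ∀ X ∈ C, ∀ Y ∈ D, Set.Subsingleton (X ∩ Y)

/-- A representation graph `(F, φ)` for the bi-separated graph `Ed`: for every vertex
`w` of `F` and every block `X ∈ C` (resp. `Y ∈ D`) based at `φ(w)` there is exactly
one edge of `F` with source (resp. range) `w` whose `φ`-image lies in `X` (resp. `Y`). -/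
def IsRepGraph (Ed : BisepGraph) (F : DGraph) (φ : GraphHom F Ed.G) : Prop :=
  (∀ w : F.V, ∀ X ∈ Ed.C, (∀ e ∈ X, Ed.G.s e = φ.v w) →
      ∃! f : F.E, F.s f = w ∧ φ.e f ∈ X) ∧
  (∀ w : F.V, ∀ Y ∈ Ed.D, (∀ e ∈ Y, Ed.G.r e = φ.v w) →
      ∃! f : F.E, F.r f = w ∧ φ.e f ∈ Y)

/-- The image `φ(Walk_u(F))` of the set of walks of `F` starting at `u`: a walk of `E`
is recorded as a pair (starting vertex, list of double-graph edges). -/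
def WalkImg {F E : DGraph} (φ : GraphHom F E) (u : F.V) : Set (E.V × List (DE E)) :=
  {pm | ∃ l v, IsWalk F u l v ∧ pm = (φ.v u, List.map (mapD φ) l)}

/-- A representation graph is irreducible if distinct vertices have distinct
images of based walk sets. -/
def IrreducibleRep {F E : DGraph} (φ : GraphHom F E) : Prop :=
  ∀ u v : F.V, u ≠ v → WalkImg φ u ≠ WalkImg φ v

section Aux

variable {Ed : BisepGraph} {F : DGraph} {φ : GraphHom F Ed.G}

lemma lift_unique_s (hrep : IsRepGraph Ed F φ) (f f' : F.E)
    (hs : F.s f = F.s f') (he : φ.e f = φ.e f') : f = f' := by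
  obtain ⟨X, ⟨hXC, hgX⟩, -⟩ := Ed.hCpart (φ.e f)
  obtain ⟨f₀, -, huniq⟩ := hrep.1 (F.s f) X hXC (fun e heX => by
    rw [Ed.hCs X hXC e heX (φ.e f) hgX, φ.hs f])
  have h1 := huniq f ⟨rfl, hgX⟩
  have h2 := huniq f' ⟨hs.symm, he ▸ hgX⟩
  rw [h1, h2]

lemma lift_unique_r (hrep : IsRepGraph Ed F φ) (f f' : F.E)
    (hr : F.r f = F.r f') (he : φ.e f = φ.e f') : f = f' := by
  obtain ⟨Y, ⟨hYD, hgY⟩, -⟩ := Ed.hDpart (φ.e f)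
  obtain ⟨f₀, -, huniq⟩ := hrep.2 (F.r f) Y hYD (fun e heY => by
    rw [Ed.hDr Y hYD e heY (φ.e f) hgY, φ.hr f])
  have h1 := huniq f ⟨rfl, hgY⟩
  have h2 := huniq f' ⟨hr.symm, he ▸ hgY⟩
  rw [h1, h2]

lemma step_unique (hrep : IsRepGraph Ed F φ) (x x' : DE F)
    (hds : F.ds x = F.ds x') (hmap : mapD φ x = mapD φ x') : x = x' := by
  cases x with
  | inl e =>
    cases x' with
    | inl e' =>
      simp only [mapD, Sum.map_inl, Sum.inl.injEq] at hmap
      simp only [DGraph.ds, Sum.elim_inl] at hds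
      exact congrArg Sum.inl (lift_unique_s hrep e e' hds hmap)
    | inr e' => simp [mapD, Sum.map] at hmap
  | inr e =>
    cases x' with
    | inl e' => simp [mapD, Sum.map] at hmap
    | inr e' =>
      simp only [mapD, Sum.map_inr, Sum.inr.injEq] at hmap
      simp only [DGraph.ds, Sum.elim_inr] at hds
      exact congrArg Sum.inr (lift_unique_r hrep e e' hds hmap)

lemma main_s (hrep : IsRepGraph Ed F φ) :
    ∀ (l l' : List (DE F)) (u v v' : F.V), IsWalk F u l v → IsWalk F u l' v' →
      List.map (mapD φ) l = List.map (mapD φ) l' → l = l' ∧ v = v' := by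
  intro l
  induction l with
  | nil =>
    intro l' u v v' hl hl' himg
    cases l' with
    | nil => exact ⟨rfl, hl.symm.trans hl'⟩
    | cons x l' => simp at himg
  | cons x l ih =>
    intro l' u v v' hl hl' himg
    cases l' with
    | nil => simp at himg
    | cons x' t' =>
      simp only [List.map_cons, List.cons.injEq] at himg
      obtain ⟨hx, hds⟩ := hl
      obtain ⟨hx', hds'⟩ := hl'
      have hxx' : x = x' := step_unique hrep x x' (hx.trans hx'.symm) himg.1
      subst hxx'
      obtain ⟨h1, h2⟩ := ih t' (F.dr x) v v' hds hds' himg.2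
      exact ⟨by rw [h1], h2⟩

lemma isWalk_append {G : DGraph} : ∀ (l1 l2 : List (DE G)) (u w v : G.V),
    IsWalk G u l1 w → IsWalk G w l2 v → IsWalk G u (l1 ++ l2) v := by
  intro l1
  induction l1 with
  | nil => intro l2 u w v h1 h2; cases h1; exact h2
  | cons x t ih =>
    intro l2 u w v h1 h2
    exact ⟨h1.1, ih l2 _ w v h1.2 h2⟩

lemma ds_bar {G : DGraph} (x : DE G) : G.ds (G.bar x) = G.dr x := by
  cases x <;> rfl

lemma dr_bar {G : DGraph} (x : DE G) : G.dr (G.bar x) = G.ds x := by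
  cases x <;> rfl

lemma walk_reverse {G : DGraph} : ∀ (l : List (DE G)) (u v : G.V),
    IsWalk G u l v → IsWalk G v (l.reverse.map G.bar) u := by
  intro l
  induction l with
  | nil => intro u v h; exact h.symm
  | cons x t ih =>
    intro u v h
    obtain ⟨h1, h2⟩ := h
    have := ih (G.dr x) v h2
    simp only [List.reverse_cons, List.map_append, List.map_cons, List.map_nil]
    exact isWalk_append _ _ v (G.dr x) u this ⟨ds_bar x, by rw [dr_bar, h1]; rfl⟩

lemma mapD_bar (x : DE F) : mapD φ (F.bar x) = Ed.G.bar (mapD φ x) := by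
  cases x <;> rfl

lemma bar_inj {G : DGraph} (x y : DE G) (h : G.bar x = G.bar y) : x = y := by
  cases x <;> cases y <;> simp_all [DGraph.bar]

end Aux

/-- Lemma 3.7: in a representation graph, two walks with the same `φ`-image and the
same source (or the same range) are equal. -/
theorem stmt_4 (Ed : BisepGraph) (F : DGraph) (φ : GraphHom F Ed.G)
    (hrep : IsRepGraph Ed F φ)
    (u u' v v' : F.V) (l l' : List (DE F))
    (hl : IsWalk F u l v) (hl' : IsWalk F u' l' v')
    (himg : List.map (mapD φ) l = List.map (mapD φ) l')
    (hend : u = u' ∨ v = v') :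
    l = l' ∧ u = u' ∧ v = v' := by
  rcases hend with h | h
  · subst h
    obtain ⟨h1, h2⟩ := main_s hrep l l' u v v' hl hl' himg
    exact ⟨h1, rfl, h2⟩
  · subst h
    have hw := walk_reverse l u v hl
    have hw' := walk_reverse l' u' v hl'
    have himg' : List.map (mapD φ) (l.reverse.map F.bar)
        = List.map (mapD φ) (l'.reverse.map F.bar) := by
      simp only [List.map_map]
      have : (mapD φ ∘ F.bar) = (Ed.G.bar ∘ mapD φ) := funext mapD_bar
      simp only [this, ← List.map_map, List.map_reverse, himg]
    obtain ⟨h1, h2⟩ := main_s hrep _ _ v u u' hw hw' himg'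
    have hll' : l = l' := by
      have hmapinj : Function.Injective (List.map F.bar) :=
        List.map_injective_iff.mpr fun a b => bar_inj a b
      have := hmapinj h1
      exact List.reverse_injective this
    exact ⟨hll', h2, rfl⟩
end

section
/- Let α : (F, φ) → (G, ψ) be a morphism of representation graphs for a finitely bi-separated graph Ė (i.e., α : F → G is a graph homomorphism with ψ ∘ α = φ). Then for every vertex u of F, φ(Walk_u(F)) = ψ(Walk_{α(u)}(G)). -/
lemma ds_mapD {F E : DGraph} (φ : GraphHom F E) (x : DE F) :
    E.ds (mapD φ x) = φ.v (F.ds x) := by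
  cases x <;> simp [DGraph.ds, mapD, φ.hs, φ.hr]

lemma dr_mapD {F E : DGraph} (φ : GraphHom F E) (x : DE F) :
    E.dr (mapD φ x) = φ.v (F.dr x) := by
  cases x <;> simp [DGraph.dr, mapD, φ.hs, φ.hr]

lemma isWalk_map {F E : DGraph} (φ : GraphHom F E) :
    ∀ {l : List (DE F)} {u v : F.V}, IsWalk F u l v →
      IsWalk E (φ.v u) (List.map (mapD φ) l) (φ.v v)
  | [], _, _, h => congrArg φ.v h
  | x :: l, u, v, h =>
    ⟨by rw [ds_mapD, h.1], by rw [dr_mapD]; exact isWalk_map φ h.2⟩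

/-- Lemma 3.10: a morphism `α : (F,φ) → (G,ψ)` of representation graphs satisfies
`φ(Walk_u(F)) = ψ(Walk_{α(u)}(G))` for every vertex `u` of `F`. -/
theorem stmt_6 (Ed : BisepGraph) (F G : DGraph)
    (φ : GraphHom F Ed.G) (ψ : GraphHom G Ed.G)
    (hF : IsRepGraph Ed F φ) (hG : IsRepGraph Ed G ψ)
    (α : GraphHom F G) (hcomm : ψ.comp α = φ) (u : F.V) :
    WalkImg φ u = WalkImg ψ (α.v u) := by
  have hv : ∀ w, φ.v w = ψ.v (α.v w) := fun w => by rw [← hcomm]; rfl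
  have he : ∀ f, φ.e f = ψ.e (α.e f) := fun f => by rw [← hcomm]; rfl
  have hmapD : ∀ x : DE F, mapD φ x = mapD ψ (mapD α x) := by
    intro x; cases x <;> simp [mapD, he]
  -- edge lifting along α
  have lift : ∀ (w : F.V) (d : DE G), G.ds d = α.v w →
      ∃ f : DE F, F.ds f = w ∧ mapD α f = d := by
    intro w d hd
    cases d with
    | inl g =>
      obtain ⟨X, ⟨hXC, heX⟩, _⟩ := Ed.hCpart (ψ.e g)
      have hsrc : ∀ e' ∈ X, Ed.G.s e' = φ.v w := by
        intro e' he'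
        have hd' : G.s g = α.v w := hd
        rw [Ed.hCs X hXC e' he' (ψ.e g) heX, ψ.hs, hd', hv]
      obtain ⟨f, ⟨hfs, hfX⟩, _⟩ := hF.1 w X hXC hsrc
      have hsrc' : ∀ e' ∈ X, Ed.G.s e' = ψ.v (α.v w) := by
        intro e' he'; rw [hsrc e' he', hv]
      obtain ⟨g', _, hguniq⟩ := hG.1 (α.v w) X hXC hsrc'
      have h1 : α.e f = g' := by
        apply hguniq
        refine ⟨by rw [α.hs, hfs], ?_⟩
        rw [← he]; exact hfX
      have h2 : g = g' := hguniq g ⟨hd, heX⟩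
      exact ⟨Sum.inl f, hfs, by simp [mapD, h1, h2]⟩
    | inr g =>
      obtain ⟨Y, ⟨hYD, heY⟩, _⟩ := Ed.hDpart (ψ.e g)
      have hrng : ∀ e' ∈ Y, Ed.G.r e' = φ.v w := by
        intro e' he'
        have hd' : G.r g = α.v w := hd
        rw [Ed.hDr Y hYD e' he' (ψ.e g) heY, ψ.hr, hd', hv]
      obtain ⟨f, ⟨hfr, hfY⟩, _⟩ := hF.2 w Y hYD hrng
      have hrng' : ∀ e' ∈ Y, Ed.G.r e' = ψ.v (α.v w) := by
        intro e' he'; rw [hrng e' he', hv]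
      obtain ⟨g', _, hguniq⟩ := hG.2 (α.v w) Y hYD hrng'
      have h1 : α.e f = g' := by
        apply hguniq
        refine ⟨by rw [α.hr, hfr], ?_⟩
        rw [← he]; exact hfY
      have h2 : g = g' := hguniq g ⟨hd, heY⟩
      exact ⟨Sum.inr f, hfr, by simp [mapD, h1, h2]⟩
  -- walk lifting along α
  have liftWalk : ∀ (l : List (DE G)) (w : F.V) (x : G.V),
      IsWalk G (α.v w) l x →
      ∃ l' : List (DE F), ∃ v : F.V, IsWalk F w l' v ∧ List.map (mapD α) l' = l := by
    intro l
    induction l with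
    | nil => intro w x _; exact ⟨[], w, rfl, rfl⟩
    | cons d l ih =>
      intro w x hwalk
      obtain ⟨f, hfs, hfd⟩ := lift w d hwalk.1
      have hdr : G.dr d = α.v (F.dr f) := by rw [← hfd, dr_mapD]
      obtain ⟨l', v, hw', hm'⟩ := ih (F.dr f) x (by rw [← hdr]; exact hwalk.2)
      exact ⟨f :: l', v, ⟨hfs, hw'⟩, by simp [hfd, hm']⟩
  ext pm
  constructor
  · rintro ⟨l, v, hw, rfl⟩
    refine ⟨List.map (mapD α) l, α.v v, isWalk_map α hw, ?_⟩
    rw [hv, List.map_map]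
    congr 1
    exact List.map_congr_left fun y _ => hmapD y
  · rintro ⟨l, x, hw, rfl⟩
    obtain ⟨l', v, hw', hm'⟩ := liftWalk l u x hw
    refine ⟨l', v, hw', ?_⟩
    rw [hv, ← hm', List.map_map]
    congr 1
    exact List.map_congr_left fun y _ => (hmapD y).symm
end

section
/- Let α : (F, φ) → (G, ψ) be a morphism of representation graphs for a finitely bi-separated graph Ė. Then (F, α) is a covering of G: for every vertex u of F, α restricts to bijections s⁻¹(u) → s⁻¹(α(u)) and r⁻¹(u) → r⁻¹(α(u)). -/
/-- Proposition 3.11: a morphism `α : (F,φ) → (G,ψ)` of representation graphs makes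
`(F, α)` a covering of `G`. -/
theorem stmt_7 (Ed : BisepGraph) (F G : DGraph)
    (φ : GraphHom F Ed.G) (ψ : GraphHom G Ed.G)
    (hF : IsRepGraph Ed F φ) (hG : IsRepGraph Ed G ψ)
    (α : GraphHom F G) (hcomm : ψ.comp α = φ) :
    IsCovering α := by
  have hv : ∀ x, ψ.v (α.v x) = φ.v x := fun x => congrFun (congrArg GraphHom.v hcomm) x
  have he : ∀ f, ψ.e (α.e f) = φ.e f := fun f => congrFun (congrArg GraphHom.e hcomm) f
  constructor
  · intro w
    refine ⟨fun f hf => ?_, fun f1 hf1 f2 hf2 heq => ?_, fun g hg => ?_⟩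
    · show G.s (α.e f) = α.v w
      rw [α.hs, hf]
    · obtain ⟨X, ⟨hXC, hX1⟩, hXuniq⟩ := Ed.hCpart (φ.e f1)
      have hs1 : Ed.G.s (φ.e f1) = φ.v w := by rw [φ.hs, hf1]
      have hall : ∀ e ∈ X, Ed.G.s e = φ.v w := fun e heX => by
        rw [Ed.hCs X hXC e heX (φ.e f1) hX1, hs1]
      obtain ⟨f, _, hfu⟩ := hF.1 w X hXC hall
      have hX2 : φ.e f2 ∈ X := by
        rw [← he f2, ← heq, he f1]; exact hX1
      have e1 := hfu f1 ⟨hf1, hX1⟩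
      have e2 := hfu f2 ⟨hf2, hX2⟩
      rw [e1, e2]
    · obtain ⟨X, ⟨hXC, hX1⟩, _⟩ := Ed.hCpart (ψ.e g)
      have hsg : Ed.G.s (ψ.e g) = φ.v w := by
        rw [ψ.hs, hg, hv]
      have hall : ∀ e ∈ X, Ed.G.s e = φ.v w := fun e heX => by
        rw [Ed.hCs X hXC e heX (ψ.e g) hX1, hsg]
      obtain ⟨f, ⟨hfs, hfX⟩, _⟩ := hF.1 w X hXC hall
      have hallG : ∀ e ∈ X, Ed.G.s e = ψ.v (α.v w) := fun e heX => by
        rw [hall e heX, hv]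
      obtain ⟨g', _, hg'u⟩ := hG.1 (α.v w) X hXC hallG
      have hαf : G.s (α.e f) = α.v w := by rw [α.hs, hfs]
      have hαfX : ψ.e (α.e f) ∈ X := by rw [he]; exact hfX
      have e1 := hg'u (α.e f) ⟨hαf, hαfX⟩
      have e2 := hg'u g ⟨hg, hX1⟩
      exact ⟨f, hfs, e1.trans e2.symm⟩
  · intro w
    refine ⟨fun f hf => ?_, fun f1 hf1 f2 hf2 heq => ?_, fun g hg => ?_⟩
    · show G.r (α.e f) = α.v w
      rw [α.hr, hf]
    · obtain ⟨Y, ⟨hYD, hY1⟩, _⟩ := Ed.hDpart (φ.e f1)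
      have hr1 : Ed.G.r (φ.e f1) = φ.v w := by rw [φ.hr, hf1]
      have hall : ∀ e ∈ Y, Ed.G.r e = φ.v w := fun e heY => by
        rw [Ed.hDr Y hYD e heY (φ.e f1) hY1, hr1]
      obtain ⟨f, _, hfu⟩ := hF.2 w Y hYD hall
      have hY2 : φ.e f2 ∈ Y := by
        rw [← he f2, ← heq, he f1]; exact hY1
      have e1 := hfu f1 ⟨hf1, hY1⟩
      have e2 := hfu f2 ⟨hf2, hY2⟩
      rw [e1, e2]
    · obtain ⟨Y, ⟨hYD, hY1⟩, _⟩ := Ed.hDpart (ψ.e g)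
      have hrg : Ed.G.r (ψ.e g) = φ.v w := by
        rw [ψ.hr, hg, hv]
      have hall : ∀ e ∈ Y, Ed.G.r e = φ.v w := fun e heY => by
        rw [Ed.hDr Y hYD e heY (ψ.e g) hY1, hrg]
      obtain ⟨f, ⟨hfr, hfY⟩, _⟩ := hF.2 w Y hYD hall
      have hallG : ∀ e ∈ Y, Ed.G.r e = ψ.v (α.v w) := fun e heY => by
        rw [hall e heY, hv]
      obtain ⟨g', _, hg'u⟩ := hG.2 (α.v w) Y hYD hallG
      have hαf : G.r (α.e f) = α.v w := by rw [α.hr, hfr]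
      have hαfY : ψ.e (α.e f) ∈ Y := by rw [he]; exact hfY
      have e1 := hg'u (α.e f) ⟨hαf, hαfY⟩
      have e2 := hg'u g ⟨hg, hY1⟩
      exact ⟨f, hfr, e1.trans e2.symm⟩
end

section
/- Let G be a free group and K a field. Then the group algebra KG has no nontrivial idempotents: if x ∈ KG satisfies x² = x, then x = 0 or x = 1. -/
noncomputable section

namespace Stmt17

attribute [local instance] Classical.propDecidable

variable {α : Type*}

/-- Noncommutative formal series over alphabet `α` with `ℤ` coefficients. -/
def NC (α : Type*) : Type _ := List α → ℤ

namespace NC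

instance : One (NC α) := ⟨fun w => if w = [] then 1 else 0⟩

instance : Mul (NC α) :=
  ⟨fun f g w => ∑ i ∈ Finset.range (w.length + 1), f (w.take i) * g (w.drop i)⟩

lemma one_apply (w : List α) : (1 : NC α) w = if w = [] then 1 else 0 := rfl

lemma mul_apply (f g : NC α) (w : List α) :
    (f * g) w = ∑ i ∈ Finset.range (w.length + 1), f (w.take i) * g (w.drop i) := rfl

protected lemma one_mul (f : NC α) : 1 * f = f := by
  funext w
  rw [mul_apply, Finset.sum_eq_single 0]
  · simp [one_apply]
  · intro i hi hne
    rw [Finset.mem_range] at hi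
    have h : w.take i ≠ [] := by
      simp only [ne_eq, List.take_eq_nil_iff]
      rintro (h | h)
      · exact hne h
      · subst h; simp at hi; exact hne hi
    simp [one_apply, h]
  · intro h; simp at h

protected lemma mul_one (f : NC α) : f * 1 = f := by
  funext w
  rw [mul_apply, Finset.sum_eq_single w.length]
  · simp [one_apply]
  · intro i hi hne
    rw [Finset.mem_range] at hi
    have h : w.drop i ≠ [] := by
      simp only [ne_eq, List.drop_eq_nil_iff]
      omega
    simp [one_apply, h]
  · intro h; simp at h

protected lemma mul_assoc (f g h : NC α) : f * g * h = f * (g * h) := by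
  funext w
  have L1 : (f * g * h) w
      = ∑ p ∈ (Finset.range (w.length + 1)).sigma (fun k => Finset.range (k + 1)),
          f (w.take p.2) * g ((w.drop p.2).take (p.1 - p.2)) * h (w.drop p.1) := by
    rw [mul_apply, Finset.sum_sigma]
    refine Finset.sum_congr rfl fun k hk => ?_
    rw [Finset.mem_range] at hk
    rw [mul_apply, Finset.sum_mul]
    have hlen : (w.take k).length = k := by
      rw [List.length_take]; omega
    rw [hlen]
    refine Finset.sum_congr rfl fun i hi => ?_
    rw [Finset.mem_range] at hi
    congr 2
    · rw [List.take_take, min_eq_left (by omega)]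
    · rw [List.drop_take]
  have L2 : (f * (g * h)) w
      = ∑ p ∈ (Finset.range (w.length + 1)).sigma (fun i => Finset.range (w.length - i + 1)),
          f (w.take p.1) * g ((w.drop p.1).take p.2) * h (w.drop (p.1 + p.2)) := by
    rw [mul_apply, Finset.sum_sigma]
    refine Finset.sum_congr rfl fun i hi => ?_
    rw [Finset.mem_range] at hi
    rw [mul_apply, Finset.mul_sum, List.length_drop]
    refine Finset.sum_congr rfl fun j hj => ?_
    rw [List.drop_drop, mul_assoc]
  rw [L1, L2]
  refine Finset.sum_nbij' (fun p => ⟨p.2, p.1 - p.2⟩) (fun p => ⟨p.1 + p.2, p.1⟩)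
    ?_ ?_ ?_ ?_ ?_
  · rintro ⟨k, i⟩ hp
    simp only [Finset.mem_sigma, Finset.mem_range] at hp ⊢
    omega
  · rintro ⟨i, j⟩ hp
    simp only [Finset.mem_sigma, Finset.mem_range] at hp ⊢
    omega
  · rintro ⟨k, i⟩ hp
    simp only [Finset.mem_sigma, Finset.mem_range] at hp
    have h1 : i + (k - i) = k := by omega
    simp [h1]
  · rintro ⟨i, j⟩ hp
    simp only [Finset.mem_sigma, Finset.mem_range] at hp
    have h1 : i + j - i = j := by omega
    simp [h1]
  · rintro ⟨k, i⟩ hp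
    simp only [Finset.mem_sigma, Finset.mem_range] at hp
    have : i + (k - i) = k := by omega
    rw [this]

instance : Monoid (NC α) where
  mul_assoc := NC.mul_assoc
  one_mul := NC.one_mul
  mul_one := NC.mul_one

end NC

end Stmt17
-- appended to part1 content when testing
namespace Stmt17
namespace NC
attribute [local instance] Classical.propDecidable
variable {α : Type*}

/-- The series `1 + X_a`. -/
def pos (a : α) : NC α := fun w => if w = [] then 1 else if w = [a] then 1 else 0

/-- The series `(1 + X_a)⁻¹ = 1 - X_a + X_a² - ⋯`. -/
def neg (a : α) : NC α := fun w => if ∀ x ∈ w, x = a then (-1) ^ w.length else 0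

lemma pos_nil (a : α) : pos a ([] : List α) = 1 := by simp [pos]

lemma neg_nil (a : α) : neg a ([] : List α) = 1 := by simp [neg]

lemma pos_cons (a y : α) (l : List α) :
    pos a (y :: l) = if y = a ∧ l = [] then 1 else 0 := by
  simp only [pos, List.cons_ne_nil, if_false]
  congr 1
  simp [List.cons_eq_cons, eq_comm]

lemma neg_cons (a y : α) (l : List α) :
    neg a (y :: l) = if y = a then -(neg a l) else 0 := by
  simp only [neg, List.forall_mem_cons, List.length_cons, pow_succ]
  by_cases hy : y = a
  · simp only [hy, true_and, if_true]
    split_ifs <;> ring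
  · simp [hy]

lemma pos_mul_apply (a : α) (f : NC α) (w : List α) :
    (pos a * f) w = f w + (if w.head? = some a then f w.tail else 0) := by
  rw [mul_apply, Finset.sum_range_succ']
  simp only [List.take_zero, List.drop_zero, pos_nil, one_mul]
  cases w with
  | nil => simp
  | cons y t =>
    simp only [List.head?_cons, List.tail_cons, List.length_cons]
    have h1 : ∀ i, (y :: t).take (i + 1) = y :: t.take i := fun i => rfl
    have h2 : ∀ i, (y :: t).drop (i + 1) = t.drop i := fun i => rfl
    rw [add_comm]
    congr 1
    calc ∑ i ∈ Finset.range (t.length + 1), pos a ((y :: t).take (i + 1)) * f ((y :: t).drop (i + 1))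
        = ∑ i ∈ Finset.range (t.length + 1), pos a (y :: t.take i) * f (t.drop i) := by
          refine Finset.sum_congr rfl fun i _ => by rw [h1, h2]
      _ = (if y = a then f t else 0) := by
          rw [Finset.sum_eq_single 0]
          · simp [pos_cons]
          · intro i hi hne
            rw [Finset.mem_range] at hi
            have : t.take i ≠ [] := by
              simp only [ne_eq, List.take_eq_nil_iff]
              rintro (h | h)
              · exact hne h
              · subst h; simp at hi; exact hne hi
            simp [pos_cons, this]
          · intro h; simp at h
      _ = (if (some y : Option α) = some a then f t else 0) := by simp

lemma neg_mul_apply (a : α) (f : NC α) (w : List α) :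
    (neg a * f) w = f w - (if w.head? = some a then (neg a * f) w.tail else 0) := by
  conv_lhs => rw [mul_apply, Finset.sum_range_succ']
  simp only [List.take_zero, List.drop_zero, neg_nil, one_mul]
  cases w with
  | nil => simp
  | cons y t =>
    simp only [List.head?_cons, List.tail_cons, List.length_cons]
    have key : ∑ i ∈ Finset.range (t.length + 1),
        neg a ((y :: t).take (i + 1)) * f ((y :: t).drop (i + 1))
        = if y = a then -((neg a * f) t) else 0 := by
      have h1 : ∀ i, (y :: t).take (i + 1) = y :: t.take i := fun i => rfl
      have h2 : ∀ i, (y :: t).drop (i + 1) = t.drop i := fun i => rfl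
      by_cases hy : y = a
      · rw [if_pos hy, mul_apply, ← Finset.sum_neg_distrib]
        refine Finset.sum_congr rfl fun i _ => ?_
        rw [h1, h2, neg_cons, if_pos hy]
        ring
      · simp only [hy, if_false]
        refine Finset.sum_eq_zero fun i _ => ?_
        rw [h1, h2, neg_cons, if_neg hy, zero_mul]
    rw [key]
    by_cases hy : y = a <;> simp [hy] <;> ring

lemma pos_mul_neg (a : α) : pos a * neg a = 1 := by
  funext w
  rw [pos_mul_apply]
  cases w with
  | nil => simp [neg_nil, one_apply]
  | cons y t =>
    simp only [List.head?_cons, List.tail_cons, neg_cons, one_apply, List.cons_ne_nil, if_false]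
    by_cases hy : y = a <;> simp [hy]

lemma neg_mul_pos_apply (a : α) : ∀ w : List α, (neg a * pos a) w = (1 : NC α) w := by
  intro w
  induction w with
  | nil => rw [neg_mul_apply]; simp [pos_nil, one_apply]
  | cons y t ih =>
    rw [neg_mul_apply]
    simp only [List.head?_cons, List.tail_cons, pos_cons, one_apply, List.cons_ne_nil, if_false]
    by_cases hy : y = a
    · simp only [hy, true_and, if_true, Option.some.injEq]
      rw [ih, one_apply]
      split_ifs <;> simp_all
    · simp [hy]

lemma neg_mul_pos (a : α) : neg a * pos a = 1 := funext (neg_mul_pos_apply a)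

/-- The unit `1 + X_a` of the series monoid. -/
def U (a : α) : (NC α)ˣ := ⟨pos a, neg a, pos_mul_neg a, neg_mul_pos a⟩

end NC
end Stmt17
namespace Stmt17
namespace NC
attribute [local instance] Classical.propDecidable
variable {α : Type*}

/-- The series associated to a word in the free group. -/
def gen (L : List (α × Bool)) : NC α :=
  (L.map fun p => bif p.2 then pos p.1 else neg p.1).prod

lemma gen_nil : gen ([] : List (α × Bool)) = 1 := rfl

lemma gen_cons (p : α × Bool) (L : List (α × Bool)) :
    gen (p :: L) = (bif p.2 then pos p.1 else neg p.1) * gen L := by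
  simp [gen]

/-- The sequence of letters of a word. -/
def wordOf (L : List (α × Bool)) : List α := L.map Prod.fst

lemma wordOf_nil : wordOf ([] : List (α × Bool)) = [] := rfl

lemma wordOf_cons (p : α × Bool) (L : List (α × Bool)) :
    wordOf (p :: L) = p.1 :: wordOf L := rfl

/-- Reduced words: adjacent letters with the same base have the same sign. -/
def Red' (L : List (α × Bool)) : Prop :=
  List.Chain' (fun p q => p.1 = q.1 → p.2 = q.2) L

/-- Main vanishing lemma: the coefficient of `v ++ wordOf L` in `gen L` vanishes
whenever `v` contains a letter different from the leading letter of `L`. -/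
lemma gen_apply_eq_zero :
    ∀ (L : List (α × Bool)), Red' L → ∀ (v : List α), v ≠ [] →
      (∀ p : α × Bool, L.head? = some p → ∃ x ∈ v, x ≠ p.1) →
      gen L (v ++ wordOf L) = 0 := by
  intro L
  induction L with
  | nil =>
    intro _ v hv _
    simp [gen_nil, wordOf_nil, one_apply, hv]
  | cons p L₀ ih =>
    obtain ⟨a, b⟩ := p
    intro hred v hv hhead
    obtain ⟨x, hxv, hxa⟩ := hhead (a, b) rfl
    have hred₀ : Red' L₀ := hred.tail
    have aux : ∀ u : List α, (∃ z ∈ u, z ≠ a) → gen L₀ ((u ++ [a]) ++ wordOf L₀) = 0 := by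
      rintro u ⟨z, hzu, hza⟩
      refine ih hred₀ (u ++ [a]) (by simp) ?_
      intro q _hq
      by_cases hqa : q.1 = a
      · exact ⟨z, by simp [hzu], hqa ▸ hza⟩
      · exact ⟨a, by simp, fun h => hqa h.symm⟩
    have hw : v ++ wordOf ((a, b) :: L₀) = (v ++ [a]) ++ wordOf L₀ := by
      rw [wordOf_cons, List.append_assoc]
      rfl
    cases b with
    | true =>
      rw [gen_cons, hw]
      show (pos a * gen L₀) _ = 0
      rw [pos_mul_apply, aux v ⟨x, hxv, hxa⟩, zero_add]
      cases v with
      | nil => exact absurd rfl hv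
      | cons y v' =>
        by_cases hy : y = a
        · have hh : (((y :: v') ++ [a]) ++ wordOf L₀).head? = some a := by simp [hy]
          rw [if_pos hh]
          have htail : (((y :: v') ++ [a]) ++ wordOf L₀).tail = (v' ++ [a]) ++ wordOf L₀ := by
            simp
          rw [htail]
          have hxv' : x ∈ v' := by
            rcases List.mem_cons.mp hxv with h | h
            · exact absurd (h.trans hy) hxa
            · exact h
          exact aux v' ⟨x, hxv', hxa⟩
        · rw [if_neg]
          simp [hy]
    | false =>
      rw [gen_cons, hw]
      show (neg a * gen L₀) ((v ++ [a]) ++ wordOf L₀) = 0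
      clear hw hv
      induction v with
      | nil => exact absurd hxv List.not_mem_nil
      | cons y v' ihv =>
        rw [neg_mul_apply, aux (y :: v') ⟨x, hxv, hxa⟩, zero_sub, neg_eq_zero]
        by_cases hy : y = a
        · have hh : (((y :: v') ++ [a]) ++ wordOf L₀).head? = some a := by simp [hy]
          rw [if_pos hh]
          have htail : (((y :: v') ++ [a]) ++ wordOf L₀).tail = (v' ++ [a]) ++ wordOf L₀ := by
            simp
          rw [htail]
          have hxv' : x ∈ v' := by
            rcases List.mem_cons.mp hxv with h | h
            · exact absurd (h.trans hy) hxa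
            · exact h
          refine ihv hxv' ?_
          intro p hp
          simp only [List.head?_cons, Option.some.injEq] at hp
          exact ⟨x, hxv', by rw [← hp]; exact hxa⟩
        · rw [if_neg]
          simp [hy]

/-- Generalized binomial coefficient: coefficient of `X^t` in `(1+X)^{±m}`. -/
def co (b : Bool) (m t : ℕ) : ℤ :=
  bif b then (m.choose t : ℤ) else (-1) ^ t * ((m - 1 + t).choose t : ℤ)

lemma co_self_ne_zero (b : Bool) (m : ℕ) : co b m m ≠ 0 := by
  cases b with
  | true => simp [co]
  | false =>
    simp only [co, cond]
    refine mul_ne_zero (by positivity) ?_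
    have : 0 < (m - 1 + m).choose m := Nat.choose_pos (by omega)
    exact_mod_cast this.ne'

lemma head?_wordOf_ne {L' : List (α × Bool)} {a : α}
    (hhead : ∀ p : α × Bool, L'.head? = some p → p.1 ≠ a) :
    (wordOf L').head? ≠ some a := by
  cases L' with
  | nil => simp [wordOf_nil]
  | cons q t =>
    rw [wordOf_cons]
    simpa using hhead q rfl

lemma gen_rep_zero {L' : List (α × Bool)} (hred : Red' L') {a : α}
    (hhead : ∀ p : α × Bool, L'.head? = some p → p.1 ≠ a) {s : ℕ} (hs : 1 ≤ s) :
    gen L' (List.replicate s a ++ wordOf L') = 0 := by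
  refine gen_apply_eq_zero L' hred _ ?_ ?_
  · simp
    omega
  · intro p hp
    refine ⟨a, ?_, fun h => (hhead p hp) h.symm⟩
    simp [List.mem_replicate]
    omega

lemma head?_rep_append (a : α) (s : ℕ) (u : List α) (hs : 1 ≤ s) :
    (List.replicate s a ++ u).head? = some a := by
  cases s with
  | zero => omega
  | succ s => simp [List.replicate_succ]

lemma tail_rep_append (a : α) (s : ℕ) (u : List α) :
    (List.replicate (s + 1) a ++ u).tail = List.replicate s a ++ u := by
  simp [List.replicate_succ]

/-- The run computation: coefficient of `a^t ++ wordOf L'` in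
`gen (replicate m (a,b) ++ L')`. -/
lemma gen_run (a : α) (b : Bool) (L' : List (α × Bool)) (hred : Red' L')
    (hhead : ∀ p : α × Bool, L'.head? = some p → p.1 ≠ a) :
    ∀ m : ℕ, 1 ≤ m → ∀ t : ℕ,
    gen (List.replicate m (a, b) ++ L') (List.replicate t a ++ wordOf L')
      = co b m t * gen L' (wordOf L') := by
  have hu : (wordOf L').head? ≠ some a := head?_wordOf_ne hhead
  have hu0 : ¬ (List.replicate 0 a ++ wordOf L').head? = some a := by
    simpa using hu
  intro m
  induction m with
  | zero => omega
  | succ m ihm =>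
    intro _
    rcases Nat.eq_zero_or_pos m with hm0 | hm0
    · -- base case m + 1 = 1
      subst hm0
      have key : ∀ t, ((bif b then pos a else neg a) * gen L')
          (List.replicate t a ++ wordOf L') = co b 1 t * gen L' (wordOf L') := by
        cases b with
        | true =>
          intro t
          show (pos a * gen L') _ = _
          rw [pos_mul_apply]
          cases t with
          | zero =>
            rw [if_neg (hu0), add_zero]
            simp [co]
          | succ t' =>
            rw [gen_rep_zero hred hhead (by omega), zero_add,
                if_pos (head?_rep_append a (t' + 1) _ (by omega)), tail_rep_append]
            cases t' with
            | zero => simp [co]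
            | succ t'' =>
              rw [gen_rep_zero hred hhead (by omega)]
              have hc : co true 1 (t'' + 1 + 1) = 0 := by
                have h0 : (1 : ℕ).choose (t'' + 1 + 1) = 0 :=
                  Nat.choose_eq_zero_of_lt (by omega)
                simp [co, h0]
              rw [hc, zero_mul]
        | false =>
          intro t
          induction t with
          | zero =>
            show (neg a * gen L') _ = _
            rw [neg_mul_apply, if_neg (hu0), sub_zero]
            simp [co]
          | succ t' iht =>
            show (neg a * gen L') _ = _
            rw [neg_mul_apply, gen_rep_zero hred hhead (by omega), zero_sub,
                if_pos (head?_rep_append a (t' + 1) _ (by omega)), tail_rep_append]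
            rw [show (neg a * gen L') (List.replicate t' a ++ wordOf L')
                  = co false 1 t' * gen L' (wordOf L') from iht]
            have hc : co false 1 (t' + 1) = -co false 1 t' := by
              simp [co, pow_succ]
            rw [hc, neg_mul]
      intro t
      rw [show List.replicate 1 (a, b) ++ L' = (a, b) :: L' from rfl, gen_cons]
      exact key t
    · -- step case
      have Sm := ihm hm0
      have key : ∀ t, ((bif b then pos a else neg a) * gen (List.replicate m (a, b) ++ L'))
          (List.replicate t a ++ wordOf L')
          = co b (m + 1) t * gen L' (wordOf L') := by
        cases b with
        | true =>
          intro t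
          show (pos a * gen (List.replicate m (a, true) ++ L')) _ = _
          rw [pos_mul_apply]
          cases t with
          | zero =>
            rw [if_neg hu0, add_zero, Sm 0]
            simp [co]
          | succ t' =>
            rw [Sm (t' + 1), if_pos (head?_rep_append a (t' + 1) _ (by omega)),
                tail_rep_append, Sm t']
            have hc : co true (m + 1) (t' + 1) = co true m (t' + 1) + co true m t' := by
              simp only [co, cond]
              push_cast [Nat.choose_succ_succ m t']
              ring
            rw [hc]
            ring
        | false =>
          intro t
          induction t with
          | zero =>
            show (neg a * gen (List.replicate m (a, false) ++ L')) _ = _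
            rw [neg_mul_apply, if_neg hu0, sub_zero, Sm 0]
            simp [co]
          | succ t' iht =>
            show (neg a * gen (List.replicate m (a, false) ++ L')) _ = _
            rw [neg_mul_apply, Sm (t' + 1), if_pos (head?_rep_append a (t' + 1) _ (by omega)),
                tail_rep_append]
            rw [show (neg a * gen (List.replicate m (a, false) ++ L'))
                  (List.replicate t' a ++ wordOf L')
                  = co false (m + 1) t' * gen L' (wordOf L') from iht]
            have e1 : m + 1 - 1 + (t' + 1) = m + t' + 1 := by omega
            have e2 : m - 1 + (t' + 1) = m + t' := by omega
            have e3 : m + 1 - 1 + t' = m + t' := by omega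
            have hc : co false (m + 1) (t' + 1)
                = co false m (t' + 1) - co false (m + 1) t' := by
              simp only [co, cond]
              rw [e1, e2, e3]
              push_cast [Nat.choose_succ_succ (m + t') t']
              ring
            rw [hc]
            ring
      intro t
      rw [List.replicate_succ, List.cons_append, gen_cons]
      exact key t

/-- Decomposition of a nonempty reduced word into its first run. -/
lemma exists_run : ∀ (L : List (α × Bool)), Red' L → L ≠ [] →
    ∃ (a : α) (b : Bool) (m : ℕ) (L' : List (α × Bool)), 1 ≤ m ∧
      L = List.replicate m (a, b) ++ L' ∧ Red' L' ∧
      (∀ p : α × Bool, L'.head? = some p → p.1 ≠ a) := by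
  intro L
  induction L with
  | nil => intro _ h; exact absurd rfl h
  | cons p L₀ ih =>
    obtain ⟨a, b⟩ := p
    intro hred _
    cases L₀ with
    | nil =>
      exact ⟨a, b, 1, [], le_refl 1, rfl, List.isChain_nil, fun p hp => by simp at hp⟩
    | cons q L₁ =>
      by_cases hq : q.1 = a
      · have hb : b = q.2 := (List.isChain_cons_cons.mp hred).1 hq.symm
        obtain ⟨a₀, b₀, m₀, L₀', hm₀, heq, hred', hhead'⟩ :=
          ih hred.tail (by simp)
        have ha₀ : q = (a₀, b₀) := by
          cases m₀ with
          | zero => omega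
          | succ m₀' =>
            rw [List.replicate_succ, List.cons_append] at heq
            exact (List.cons_eq_cons.mp heq).1
        have haa : a₀ = a := by rw [ha₀] at hq; exact hq
        have hbb : b₀ = b := by rw [ha₀] at hb; exact hb.symm
        subst haa
        subst hbb
        refine ⟨a₀, b₀, m₀ + 1, L₀', by omega, ?_, hred', hhead'⟩
        rw [List.replicate_succ, List.cons_append, ← heq]
      · refine ⟨a, b, 1, q :: L₁, le_refl 1, rfl, hred.tail, ?_⟩
        intro p hp
        simp at hp
        rw [← hp]
        exact hq

lemma wordOf_append (L₁ L₂ : List (α × Bool)) :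
    wordOf (L₁ ++ L₂) = wordOf L₁ ++ wordOf L₂ := by simp [wordOf]

lemma wordOf_replicate (m : ℕ) (a : α) (b : Bool) :
    wordOf (List.replicate m (a, b)) = List.replicate m a := by simp [wordOf]

/-- The crucial non-vanishing result: for a reduced word `L`, the coefficient of
`wordOf L` in `gen L` is nonzero. -/
lemma gen_wordOf_ne_zero : ∀ (n : ℕ) (L : List (α × Bool)), L.length ≤ n → Red' L →
    gen L (wordOf L) ≠ 0 := by
  intro n
  induction n with
  | zero =>
    intro L hL _
    have : L = [] := List.length_eq_zero_iff.mp (by omega)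
    subst this
    simp [gen_nil, wordOf_nil, one_apply]
  | succ n ihn =>
    intro L hL hred
    rcases eq_or_ne L [] with h | h
    · subst h; simp [gen_nil, wordOf_nil, one_apply]
    · obtain ⟨a, b, m, L', hm, heq, hred', hhead'⟩ := exists_run L hred h
      subst heq
      rw [wordOf_append, wordOf_replicate, gen_run a b L' hred' hhead' m hm m]
      have hlen : L'.length ≤ n := by
        rw [List.length_append, List.length_replicate] at hL
        omega
      exact mul_ne_zero (co_self_ne_zero b m) (ihn L' hlen hred')

end NC
end Stmt17
namespace Stmt17
namespace NC
attribute [local instance] Classical.propDecidable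
variable {α : Type*}

lemma red'_reduce : ∀ L : List (α × Bool), Red' (FreeGroup.reduce L) := by
  intro L
  induction L with
  | nil => exact List.isChain_nil
  | cons x L₀ ih =>
    rw [FreeGroup.reduce.cons]
    cases h : FreeGroup.reduce L₀ with
    | nil => exact List.isChain_singleton x
    | cons y t =>
      rw [h] at ih
      dsimp only
      split_ifs with hc
      · exact ih.tail
      · refine List.isChain_cons_cons.mpr ⟨?_, ih⟩
        intro h1
        by_contra h2
        exact hc ⟨h1, by cases hx : x.2 <;> cases hy : y.2 <;> simp_all⟩

lemma red'_toWord (x : FreeGroup α) : Red' x.toWord := by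
  have h := FreeGroup.reduce_toWord x
  rw [← h]
  exact red'_reduce _

/-- The Magnus homomorphism. -/
def phi : FreeGroup α →* (NC α)ˣ := FreeGroup.lift U

lemma val_phi_mk (L : List (α × Bool)) :
    ((phi (FreeGroup.mk L) : (NC α)ˣ) : NC α) = gen L := by
  rw [phi, FreeGroup.lift_mk]
  calc ((List.map (fun p => bif p.2 then U p.1 else (U p.1)⁻¹) L).prod : (NC α)ˣ).val
      = (Units.coeHom (NC α)) (List.map (fun p => bif p.2 then U p.1 else (U p.1)⁻¹) L).prod :=
        rfl
    _ = (List.map (⇑(Units.coeHom (NC α)))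
          (List.map (fun p => bif p.2 then U p.1 else (U p.1)⁻¹) L)).prod :=
        map_list_prod _ _
    _ = gen L := by
        rw [List.map_map]
        unfold gen
        refine congrArg List.prod (List.map_congr_left fun p _ => ?_)
        obtain ⟨a, b⟩ := p
        cases b <;> rfl

lemma val_phi (z : FreeGroup α) : ((phi z : (NC α)ˣ) : NC α) = gen z.toWord := by
  conv_lhs => rw [← FreeGroup.mk_toWord (x := z)]
  exact val_phi_mk _

lemma phi_injective : Function.Injective (phi (α := α)) := by
  refine (injective_iff_map_eq_one phi).mpr ?_
  intro z hz
  by_contra hz1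
  have hW : z.toWord ≠ [] := fun h => hz1 (FreeGroup.toWord_eq_nil_iff.mp h)
  have h1 : gen z.toWord (wordOf z.toWord) ≠ 0 :=
    gen_wordOf_ne_zero z.toWord.length z.toWord le_rfl (red'_toWord z)
  have h2 : ((phi z : (NC α)ˣ) : NC α) = gen z.toWord := val_phi z
  rw [hz, Units.val_one] at h2
  apply h1
  rw [← h2, one_apply, if_neg]
  simpa [wordOf] using hW

lemma mul_apply_nil (f g : NC α) : (f * g) ([] : List α) = f [] * g [] := by
  rw [mul_apply]
  simp

lemma val_phi_nil (z : FreeGroup α) : ((phi z : (NC α)ˣ) : NC α) ([] : List α) = 1 := by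
  induction z using FreeGroup.induction_on with
  | C1 =>
    rw [map_one, Units.val_one, one_apply, if_pos rfl]
  | of a =>
    have : phi (FreeGroup.of a : FreeGroup α) = U a := FreeGroup.lift_apply_of
    rw [this]
    exact pos_nil a
  | inv_of a _ =>
    have : phi (FreeGroup.of a : FreeGroup α) = U a := FreeGroup.lift_apply_of
    rw [map_inv, this]
    exact neg_nil a
  | mul x y hx hy =>
    rw [map_mul, Units.val_mul, mul_apply_nil, hx, hy, one_mul]

/-- The coefficients of `f` involve only letters from `s`. -/
def InAlpha (s : Finset α) (f : NC α) : Prop := ∀ w : List α, f w ≠ 0 → ∀ c ∈ w, c ∈ s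

lemma inAlpha_mul {s t : Finset α} {f g : NC α} (hf : InAlpha s f) (hg : InAlpha t g) :
    InAlpha (s ∪ t) (f * g) := by
  intro w hw c hc
  rw [mul_apply] at hw
  obtain ⟨i, _, hne⟩ := Finset.exists_ne_zero_of_sum_ne_zero hw
  have hfi : f (w.take i) ≠ 0 := fun h => hne (by rw [h, zero_mul])
  have hgi : g (w.drop i) ≠ 0 := fun h => hne (by rw [h, mul_zero])
  rw [← List.take_append_drop i w] at hc
  rcases List.mem_append.mp hc with h | h
  · exact Finset.mem_union_left _ (hf _ hfi c h)
  · exact Finset.mem_union_right _ (hg _ hgi c h)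

lemma exists_alpha (z : FreeGroup α) :
    ∃ s : Finset α, InAlpha s ((phi z : (NC α)ˣ) : NC α) := by
  induction z using FreeGroup.induction_on with
  | C1 =>
    refine ⟨∅, fun w hw c hc => ?_⟩
    rw [map_one, Units.val_one, one_apply] at hw
    by_cases h : w = []
    · subst h; cases hc
    · rw [if_neg h] at hw; exact absurd rfl hw
  | of a =>
    have hU : phi (FreeGroup.of a : FreeGroup α) = U a := FreeGroup.lift_apply_of
    refine ⟨{a}, fun w hw c hc => ?_⟩
    rw [hU] at hw
    change pos a w ≠ 0 at hw
    unfold pos at hw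
    split_ifs at hw with h1 h2
    · subst h1; cases hc
    · subst h2
      simp at hc
      simp [hc]
    · exact absurd rfl hw
  | inv_of a _ =>
    have hU : phi (FreeGroup.of a : FreeGroup α) = U a := FreeGroup.lift_apply_of
    refine ⟨{a}, fun w hw c hc => ?_⟩
    rw [map_inv, hU] at hw
    change neg a w ≠ 0 at hw
    unfold neg at hw
    split_ifs at hw with h1
    · simp [h1 c hc]
    · exact absurd rfl hw
  | mul x y hx hy =>
    obtain ⟨sx, hsx⟩ := hx
    obtain ⟨sy, hsy⟩ := hy
    refine ⟨sx ∪ sy, ?_⟩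
    rw [map_mul, Units.val_mul]
    exact inAlpha_mul hsx hsy

end NC
end Stmt17
namespace Stmt17
namespace NC
attribute [local instance] Classical.propDecidable

section Order

variable {α : Type*} [LinearOrder α]

/-- Length-lexicographic key on words. -/
def key (w : List α) : ℕ ×ₗ List α := toLex (w.length, w)

lemma key_lt_of_length_lt {v w : List α} (h : v.length < w.length) : key v < key w :=
  Prod.Lex.lt_iff.mpr (Or.inl h)

lemma key_lt_length_le {v w : List α} (h : key v < key w) : v.length ≤ w.length := by
  rcases Prod.Lex.lt_iff.mp h with h | ⟨h, _⟩
  · exact h.le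
  · exact h.le

lemma key_injective : Function.Injective (key (α := α)) := by
  intro v w h
  exact congrArg (fun p : ℕ ×ₗ List α => (ofLex p).2) h

lemma ofFn_get_cast {n : ℕ} (w : List α) (h : w.length = n) :
    (List.ofFn fun i : Fin n => w[(i : ℕ)]'(h ▸ i.isLt)) = w := by
  subst h
  simp

lemma inAlpha_mono {s t : Finset α} (hst : s ⊆ t) {f : NC α} (hf : InAlpha s f) :
    InAlpha t f := fun w hw c hc => hst (hf w hw c hc)

lemma exists_first_diff (f g : NC α) (s : Finset α) (hf : InAlpha s f) (hg : InAlpha s g)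
    (hfg : f ≠ g) :
    ∃ w, f w ≠ g w ∧ ∀ v, key v < key w → f v = g v := by
  have hex : ∃ n, ∃ w : List α, f w ≠ g w ∧ w.length = n := by
    obtain ⟨w, hw⟩ := Function.ne_iff.mp hfg
    exact ⟨w.length, w, hw, rfl⟩
  set n := Nat.find hex with hn
  obtain ⟨w₀, hw₀, hlen₀⟩ := Nat.find_spec hex
  set D : Set (List α) := {w | f w ≠ g w ∧ w.length = n} with hD
  have hD0 : D.Nonempty := ⟨w₀, hw₀, hlen₀⟩
  have hDsub : D ⊆ Set.range (fun F : Fin n → s => (List.ofFn fun i => ((F i : α)))) := by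
    intro w hw
    obtain ⟨hw1, hw2⟩ := hw
    have hmem : ∀ c ∈ w, c ∈ s := by
      intro c hc
      by_cases hfw : f w = 0
      · have hgw : g w ≠ 0 := by rw [hfw] at hw1; exact fun h => hw1 h.symm
        exact hg w hgw c hc
      · exact hf w hfw c hc
    exact ⟨fun i => ⟨w[(i : ℕ)]'(by rw [hw2]; exact i.isLt), hmem _ (List.getElem_mem _)⟩,
      ofFn_get_cast w hw2⟩
  have hDfin : D.Finite := Set.Finite.subset (Set.finite_range _) hDsub
  obtain ⟨w, hwD, hmin⟩ := Set.exists_min_image D key hDfin hD0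
  refine ⟨w, hwD.1, ?_⟩
  intro v hv
  by_contra hne
  have hvn : n ≤ v.length := Nat.find_min' hex ⟨v, hne, rfl⟩
  have hvw : v.length ≤ w.length := key_lt_length_le hv
  have hveq : v.length = n := by
    have := hwD.2
    omega
  exact absurd hv (not_lt.mpr (hmin v ⟨hne, hveq⟩))

/-- The value of the Magnus embedding, as a series. -/
def vz (x : FreeGroup α) : NC α := ((phi x : (NC α)ˣ) : NC α)

lemma vz_mul (x y : FreeGroup α) : vz (x * y) = vz x * vz y := by
  unfold vz
  rw [map_mul, Units.val_mul]

lemma vz_injective : Function.Injective (vz (α := α)) := by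
  intro x y h
  exact phi_injective (Units.ext h)

/-- The left-invariant strict linear order on the free group. -/
def flt (x y : FreeGroup α) : Prop :=
  ∃ w : List α, vz x w < vz y w ∧ ∀ v, key v < key w → vz x v = vz y v

lemma flt_trichotomy (x y : FreeGroup α) (h : x ≠ y) : flt x y ∨ flt y x := by
  obtain ⟨sx, hsx⟩ := exists_alpha x
  obtain ⟨sy, hsy⟩ := exists_alpha y
  have hfg : vz x ≠ vz y := fun hc => h (vz_injective hc)
  obtain ⟨w, hw, hbelow⟩ := exists_first_diff (vz x) (vz y) (sx ∪ sy)
    (inAlpha_mono Finset.subset_union_left hsx)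
    (inAlpha_mono Finset.subset_union_right hsy) hfg
  rcases lt_or_gt_of_ne hw with h1 | h1
  · exact Or.inl ⟨w, h1, hbelow⟩
  · exact Or.inr ⟨w, h1, fun v hv => (hbelow v hv).symm⟩

lemma flt_irrefl (x : FreeGroup α) : ¬ flt x x := by
  rintro ⟨w, hw, -⟩
  exact lt_irrefl _ hw

lemma flt_trans {x y z : FreeGroup α} (h1 : flt x y) (h2 : flt y z) : flt x z := by
  obtain ⟨w₁, hw₁, e₁⟩ := h1
  obtain ⟨w₂, hw₂, e₂⟩ := h2
  rcases lt_trichotomy (key w₁) (key w₂) with h | h | h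
  · exact ⟨w₁, by rw [← e₂ w₁ h]; exact hw₁, fun v hv => (e₁ v hv).trans (e₂ v (hv.trans h))⟩
  · have : w₁ = w₂ := key_injective h
    subst this
    exact ⟨w₁, hw₁.trans hw₂, fun v hv => (e₁ v hv).trans (e₂ v hv)⟩
  · exact ⟨w₂, by rw [e₁ w₂ h]; exact hw₂, fun v hv => (e₁ v (hv.trans h)).trans (e₂ v hv)⟩

lemma flt_asymm {x y : FreeGroup α} (h1 : flt x y) (h2 : flt y x) : False :=
  flt_irrefl x (flt_trans h1 h2)

instance : IsStrictTotalOrder (FreeGroup α) flt where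
  trichotomous x y := by
    intro hn1 hn2
    by_contra h
    rcases flt_trichotomy x y h with h1 | h1
    · exact hn1 h1
    · exact hn2 h1
  irrefl := flt_irrefl
  trans x y z := flt_trans

lemma mul_sub_key (u f g : NC α) (hu : u [] = 1) (w : List α)
    (hbelow : ∀ v, key v < key w → f v = g v) :
    ∀ v : List α, v.length ≤ w.length → (u * f) v - (u * g) v = f v - g v := by
  intro v hv
  rw [mul_apply, mul_apply, ← Finset.sum_sub_distrib]
  have hterm : ∀ i ∈ Finset.range (v.length + 1),
      u (v.take i) * f (v.drop i) - u (v.take i) * g (v.drop i)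
        = if i = 0 then f v - g v else 0 := by
    intro i hi
    rw [Finset.mem_range] at hi
    by_cases h0 : i = 0
    · subst h0
      simp [hu]
    · rw [if_neg h0]
      have hlt : (v.drop i).length < w.length := by
        rw [List.length_drop]
        omega
      rw [hbelow _ (key_lt_of_length_lt hlt)]
      ring
  rw [Finset.sum_congr rfl hterm, Finset.sum_ite_eq' (Finset.range (v.length + 1)) 0
    (fun _ => f v - g v), if_pos (Finset.mem_range.mpr (by omega))]

lemma flt_mul_left (z x y : FreeGroup α) (h : flt x y) : flt (z * x) (z * y) := by
  obtain ⟨w, hw, hbelow⟩ := h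
  have hu : vz z [] = 1 := val_phi_nil z
  have hkey : ∀ v : List α, v.length ≤ w.length →
      vz (z * x) v - vz (z * y) v = vz x v - vz y v := by
    intro v hv
    rw [vz_mul, vz_mul]
    exact mul_sub_key (vz z) (vz x) (vz y) hu w hbelow v hv
  refine ⟨w, ?_, ?_⟩
  · have h1 := hkey w le_rfl
    have h2 : vz x w - vz y w < 0 := sub_neg.mpr hw
    have : vz (z * x) w - vz (z * y) w < 0 := by rw [h1]; exact h2
    exact sub_neg.mp this
  · intro v hv
    have h1 := hkey v (key_lt_length_le hv)
    have h2 := hbelow v hv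
    have : vz (z * x) v - vz (z * y) v = 0 := by rw [h1, h2, sub_self]
    exact sub_eq_zero.mp this

end Order

end NC

open NC in
instance instUniqueProdsFreeGroup (α : Type*) : UniqueProds (FreeGroup α) := by
  letI : LinearOrder α := IsWellOrder.linearOrder WellOrderingRel
  letI : DecidableRel (flt (α := α)) := fun _ _ => Classical.propDecidable _
  letI lo : LinearOrder (FreeGroup α) := linearOrderOfSTO flt
  haveI : MulLeftStrictMono (FreeGroup α) := by
    constructor
    intro z b c h
    exact flt_mul_left z b c h
  exact (TwoUniqueProds.of_covariant_right).toUniqueProds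

instance instUniqueProdsIsFreeGroup (G : Type*) [Group G] [IsFreeGroup G] : UniqueProds G :=
  UniqueProds.of_injective_mulHom (IsFreeGroup.toFreeGroup G).toMonoidHom.toMulHom
    (IsFreeGroup.toFreeGroup G).injective (instUniqueProdsFreeGroup _)

end Stmt17

/-- The group algebra of a free group over a field has no nontrivial idempotents:
any `x` with `x² = x` is `0` or `1`. -/
theorem stmt_17 {K : Type} [Field K] (G : Type) [Group G] [IsFreeGroup G]
    (x : MonoidAlgebra K G) (hx : x * x = x) :
    x = 0 ∨ x = 1 := by
  haveI : UniqueProds G := Stmt17.instUniqueProdsIsFreeGroup G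
  have h : x * (x - 1) = 0 := by
    rw [mul_sub, hx, mul_one, sub_self]
  rcases mul_eq_zero.mp h with h | h
  · exact Or.inl h
  · exact Or.inr (sub_eq_zero.mp h)
end
end

section
/- Let Ė be a finitely bi-separated graph and S = (Q, {Q_v}, {S_e}, {R_e}, {ρ_e}) an Ė-algebraic branching system. Define, on the K-vector space W with basis Q, endomorphisms σ_v (projection onto span of Q_v), σ_e (q ↦ ρ_e(q) if q ∈ S_e, else 0), and σ_{e*} (q ↦ ρ_e⁻¹(q) if q ∈ R_e, else 0). Then {σ_v, σ_e, σ_{e*}} is an Ė-family, i.e., these endomorphisms satisfy: σ_u σ_v = δ_{uv} σ_u; σ_{s(e)} σ_e = σ_e = σ_e σ_{r(e)} and σ_{r(e)} σ_{e*} = σ_{e*} = σ_{e*} σ_{s(e)}; Σ_{Y∈D} σ_{XY} σ_{(YX')*} = δ_{XX'} σ_{s(X)} for all X, X' ∈ C; and Σ_{X∈C} σ_{(YX)*} σ_{XY'} = δ_{YY'} σ_{r(Y)} for all Y, Y' ∈ D (with σ_0 = σ_{0*} = 0 and multiplication taken in End_K(W)^op). -/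
/-- An `Ė`-algebraic branching system: pairwise disjoint sets `Q_v` covering `Q`,
sets `S_e` partitioning `Q_v` along each block `X ∈ C_v`, sets `R_e` partitioning
`Q_v` along each block `Y ∈ D_v`, and bijections `ρ_e : S_e → R_e`. -/
structure ABSObj (Ed : BisepGraph) where
  Q : Type
  ne : Nonempty Q
  Qv : Ed.G.V → Set Q
  Se : Ed.G.E → Set Q
  Re : Ed.G.E → Set Q
  disj : ∀ u v : Ed.G.V, u ≠ v → Disjoint (Qv u) (Qv v)
  cover : ∀ q : Q, ∃ v, q ∈ Qv v
  hS : ∀ (v : Ed.G.V), ∀ X ∈ Ed.C, (∀ e ∈ X, Ed.G.s e = v) →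
    (Qv v = ⋃ e ∈ X, Se e) ∧
      (∀ e ∈ X, ∀ f ∈ X, e ≠ f → Disjoint (Se e) (Se f))
  hR : ∀ (v : Ed.G.V), ∀ Y ∈ Ed.D, (∀ e ∈ Y, Ed.G.r e = v) →
    (Qv v = ⋃ e ∈ Y, Re e) ∧
      (∀ e ∈ Y, ∀ f ∈ Y, e ≠ f → Disjoint (Re e) (Re f))
  ρ : ∀ e : Ed.G.E, (Se e) ≃ (Re e)

noncomputable section
open scoped Classical

/-- The endomorphism of the vector space with basis `α` determined by prescribed
images of the basis vectors. -/
def bEnd (K : Type) [Field K] {α : Type} (g : α → (α →₀ K)) :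
    Module.End K (α →₀ K) :=
  Finsupp.lsum K fun w => LinearMap.toSpanSingleton K _ (g w)

variable (K : Type) [Field K] {Ed : BisepGraph} (A : ABSObj Ed)

/-- The operator `σ_v`: projection onto the span of `Q_v`, in `(End W)ᵒᵖ`. -/
def tauV (v : Ed.G.V) : (Module.End K (A.Q →₀ K))ᵐᵒᵖ :=
  MulOpposite.op (bEnd K fun q => if q ∈ A.Qv v then Finsupp.single q 1 else 0)

/-- The operator `σ_e : q ↦ ρ_e(q)` for `q ∈ S_e`, else `0`, in `(End W)ᵒᵖ`. -/
def tauE (e : Ed.G.E) : (Module.End K (A.Q →₀ K))ᵐᵒᵖ :=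
  MulOpposite.op (bEnd K fun q =>
    if h : q ∈ A.Se e then Finsupp.single ((A.ρ e ⟨q, h⟩ : A.Re e) : A.Q) 1 else 0)

/-- The operator `σ_{e*} : q ↦ ρ_e⁻¹(q)` for `q ∈ R_e`, else `0`, in `(End W)ᵒᵖ`. -/
def tauS (e : Ed.G.E) : (Module.End K (A.Q →₀ K))ᵐᵒᵖ :=
  MulOpposite.op (bEnd K fun q =>
    if h : q ∈ A.Re e then Finsupp.single (((A.ρ e).symm ⟨q, h⟩ : A.Se e) : A.Q) 1
    else 0)

/-! ### Auxiliary machinery for `stmt_19` -/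

lemma bEnd_apply_single' {K : Type} [Field K] {α : Type} (g : α → α →₀ K) (q : α) (b : K) :
    bEnd K g (Finsupp.single q b) = b • g q := by
  simp [bEnd]

lemma op_bEnd_eq' {K : Type} [Field K] {α : Type} {g h : α → α →₀ K}
    (H : ∀ q, g q = h q) :
    MulOpposite.op (bEnd K g) = MulOpposite.op (bEnd K h) :=
  congrArg _ (congrArg _ (funext H))

lemma op_bEnd_mul' {K : Type} [Field K] {α : Type} (g h : α → α →₀ K) :
    MulOpposite.op (bEnd K g) * MulOpposite.op (bEnd K h) =
      MulOpposite.op (bEnd K fun q => bEnd K h (g q)) := by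
  rw [← MulOpposite.op_mul]
  congr 1
  apply Finsupp.lhom_ext
  intro q b
  simp [Module.End.mul_apply, bEnd_apply_single', map_smul]

lemma op_bEnd_zero' {K : Type} [Field K] {α : Type} :
    MulOpposite.op (bEnd K (fun _ : α => (0 : α →₀ K))) = 0 := by
  have h : bEnd K (fun _ : α => (0 : α →₀ K)) = 0 := by
    apply Finsupp.lhom_ext
    intro q b
    simp [bEnd_apply_single']
  rw [h, MulOpposite.op_zero]

lemma op_bEnd_sum' {K : Type} [Field K] {α : Type} {ι : Type} (s : Finset ι)
    (g : ι → α → α →₀ K) :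
    ∑ i ∈ s, MulOpposite.op (bEnd K (g i)) =
      MulOpposite.op (bEnd K (fun q => ∑ i ∈ s, g i q)) := by
  have h1 : (∑ i ∈ s, MulOpposite.op (bEnd K (g i))) =
      MulOpposite.op (∑ i ∈ s, bEnd K (g i)) :=
    (map_sum (MulOpposite.opAddEquiv (α := Module.End K (α →₀ K)))
      (fun i => bEnd K (g i)) s).symm
  rw [h1]
  congr 1
  apply Finsupp.lhom_ext
  intro q b
  simp [bEnd_apply_single', Finset.smul_sum]

/-- Generating function of `tauV`. -/
def gVfun (v : Ed.G.V) : A.Q → A.Q →₀ K :=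
  fun q => if q ∈ A.Qv v then Finsupp.single q 1 else 0

/-- Generating function of `tauE`. -/
def gEfun (e : Ed.G.E) : A.Q → A.Q →₀ K :=
  fun q => if h : q ∈ A.Se e then Finsupp.single ((A.ρ e ⟨q, h⟩ : A.Re e) : A.Q) 1 else 0

/-- Generating function of `tauS`. -/
def gSfun (e : Ed.G.E) : A.Q → A.Q →₀ K :=
  fun q => if h : q ∈ A.Re e then Finsupp.single (((A.ρ e).symm ⟨q, h⟩ : A.Se e) : A.Q) 1
    else 0

lemma tauV_eq (v : Ed.G.V) : tauV K A v = MulOpposite.op (bEnd K (gVfun K A v)) := rfl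
lemma tauE_eq (e : Ed.G.E) : tauE K A e = MulOpposite.op (bEnd K (gEfun K A e)) := rfl
lemma tauS_eq (e : Ed.G.E) : tauS K A e = MulOpposite.op (bEnd K (gSfun K A e)) := rfl

lemma Se_subset (e : Ed.G.E) : A.Se e ⊆ A.Qv (Ed.G.s e) := by
  obtain ⟨X, ⟨hX, heX⟩, -⟩ := Ed.hCpart e
  have hsrc : ∀ f ∈ X, Ed.G.s f = Ed.G.s e := fun f hf => Ed.hCs X hX f hf e heX
  rw [(A.hS (Ed.G.s e) X hX hsrc).1]
  exact Set.subset_biUnion_of_mem heX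

lemma Re_subset (e : Ed.G.E) : A.Re e ⊆ A.Qv (Ed.G.r e) := by
  obtain ⟨Y, ⟨hY, heY⟩, -⟩ := Ed.hDpart e
  have hrng : ∀ f ∈ Y, Ed.G.r f = Ed.G.r e := fun f hf => Ed.hDr Y hY f hf e heY
  rw [(A.hR (Ed.G.r e) Y hY hrng).1]
  exact Set.subset_biUnion_of_mem heY

/-- The diagonal product `σ_e σ_{e*}` acts as projection onto `S_e`. -/
lemma gES_diag (e : Ed.G.E) (q : A.Q) :
    bEnd K (gSfun K A e) (gEfun K A e q) =
      (if q ∈ A.Se e then Finsupp.single q 1 else 0) := by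
  by_cases h : q ∈ A.Se e
  · rw [if_pos h]
    have hp : ((A.ρ e ⟨q, h⟩ : A.Re e) : A.Q) ∈ A.Re e := (A.ρ e ⟨q, h⟩).2
    rw [show gEfun K A e q = Finsupp.single ((A.ρ e ⟨q, h⟩ : A.Re e) : A.Q) 1 from dif_pos h]
    rw [bEnd_apply_single', one_smul]
    rw [show gSfun K A e ((A.ρ e ⟨q, h⟩ : A.Re e) : A.Q) =
        Finsupp.single (((A.ρ e).symm ⟨((A.ρ e ⟨q, h⟩ : A.Re e) : A.Q), hp⟩ : A.Se e) : A.Q) 1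
        from dif_pos hp]
    have h2 : (⟨((A.ρ e ⟨q, h⟩ : A.Re e) : A.Q), hp⟩ : A.Re e) = A.ρ e ⟨q, h⟩ := rfl
    rw [h2, Equiv.symm_apply_apply]
  · rw [if_neg h, show gEfun K A e q = 0 from dif_neg h, map_zero]

/-- The diagonal product `σ_{e*} σ_e` acts as projection onto `R_e`. -/
lemma gSE_diag (e : Ed.G.E) (q : A.Q) :
    bEnd K (gEfun K A e) (gSfun K A e q) =
      (if q ∈ A.Re e then Finsupp.single q 1 else 0) := by
  by_cases h : q ∈ A.Re e
  · rw [if_pos h]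
    have hp : (((A.ρ e).symm ⟨q, h⟩ : A.Se e) : A.Q) ∈ A.Se e := ((A.ρ e).symm ⟨q, h⟩).2
    rw [show gSfun K A e q = Finsupp.single (((A.ρ e).symm ⟨q, h⟩ : A.Se e) : A.Q) 1
        from dif_pos h]
    rw [bEnd_apply_single', one_smul]
    rw [show gEfun K A e (((A.ρ e).symm ⟨q, h⟩ : A.Se e) : A.Q) =
        Finsupp.single ((A.ρ e ⟨(((A.ρ e).symm ⟨q, h⟩ : A.Se e) : A.Q), hp⟩ : A.Re e) : A.Q) 1
        from dif_pos hp]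
    have h2 : (⟨(((A.ρ e).symm ⟨q, h⟩ : A.Se e) : A.Q), hp⟩ : A.Se e) = (A.ρ e).symm ⟨q, h⟩ := rfl
    rw [h2, Equiv.apply_symm_apply]
  · rw [if_neg h, show gSfun K A e q = 0 from dif_neg h, map_zero]

/-- Off-diagonal vanishing for `σ_e σ_{f*}` when `e ≠ f` share a `D`-block. -/
lemma gES_off (e f : Ed.G.E) (hne : e ≠ f) (hc : ∃ Y ∈ Ed.D, e ∈ Y ∧ f ∈ Y) (q : A.Q) :
    bEnd K (gSfun K A f) (gEfun K A e q) = 0 := by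
  by_cases h : q ∈ A.Se e
  · obtain ⟨Y, hY, heY, hfY⟩ := hc
    have hrng : ∀ g ∈ Y, Ed.G.r g = Ed.G.r e := fun g hg => Ed.hDr Y hY g hg e heY
    have hdisj : Disjoint (A.Re e) (A.Re f) :=
      (A.hR (Ed.G.r e) Y hY hrng).2 e heY f hfY hne
    have hp : ((A.ρ e ⟨q, h⟩ : A.Re e) : A.Q) ∈ A.Re e := (A.ρ e ⟨q, h⟩).2
    have hnp : ((A.ρ e ⟨q, h⟩ : A.Re e) : A.Q) ∉ A.Re f := Set.disjoint_left.mp hdisj hp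
    rw [show gEfun K A e q = Finsupp.single ((A.ρ e ⟨q, h⟩ : A.Re e) : A.Q) 1 from dif_pos h]
    rw [bEnd_apply_single', one_smul]
    rw [show gSfun K A f ((A.ρ e ⟨q, h⟩ : A.Re e) : A.Q) = 0 from dif_neg hnp]
  · rw [show gEfun K A e q = 0 from dif_neg h, map_zero]

/-- Off-diagonal vanishing for `σ_{e*} σ_f` when `e ≠ f` share a `C`-block. -/
lemma gSE_off (e f : Ed.G.E) (hne : e ≠ f) (hc : ∃ X ∈ Ed.C, e ∈ X ∧ f ∈ X) (q : A.Q) :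
    bEnd K (gEfun K A f) (gSfun K A e q) = 0 := by
  by_cases h : q ∈ A.Re e
  · obtain ⟨X, hX, heX, hfX⟩ := hc
    have hsrc : ∀ g ∈ X, Ed.G.s g = Ed.G.s e := fun g hg => Ed.hCs X hX g hg e heX
    have hdisj : Disjoint (A.Se e) (A.Se f) :=
      (A.hS (Ed.G.s e) X hX hsrc).2 e heX f hfX hne
    have hp : (((A.ρ e).symm ⟨q, h⟩ : A.Se e) : A.Q) ∈ A.Se e := ((A.ρ e).symm ⟨q, h⟩).2
    have hnp : (((A.ρ e).symm ⟨q, h⟩ : A.Se e) : A.Q) ∉ A.Se f := Set.disjoint_left.mp hdisj hp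
    rw [show gSfun K A e q = Finsupp.single (((A.ρ e).symm ⟨q, h⟩ : A.Se e) : A.Q) 1
        from dif_pos h]
    rw [bEnd_apply_single', one_smul]
    rw [show gEfun K A f (((A.ρ e).symm ⟨q, h⟩ : A.Se e) : A.Q) = 0 from dif_neg hnp]
  · rw [show gSfun K A e q = 0 from dif_neg h, map_zero]

lemma sumS_part (X : Set Ed.G.E) (hX : X ∈ Ed.C) (v : Ed.G.V)
    (hv : ∀ e ∈ X, Ed.G.s e = v) (q : A.Q) :
    (∑ e ∈ (Ed.hCfin X hX).toFinset, if q ∈ A.Se e then Finsupp.single q (1 : K) else 0) =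
      gVfun K A v q := by
  have hcov := (A.hS v X hX hv).1
  have hsub : ∀ e ∈ X, A.Se e ⊆ A.Qv v := by
    intro e he
    rw [hcov]
    exact Set.subset_biUnion_of_mem he
  by_cases hq : q ∈ A.Qv v
  · have hq2 : q ∈ ⋃ e ∈ X, A.Se e := hcov ▸ hq
    obtain ⟨e0, he0, hqe0⟩ := Set.mem_iUnion₂.mp hq2
    rw [Finset.sum_eq_single_of_mem e0 ((Ed.hCfin X hX).mem_toFinset.mpr he0)]
    · rw [if_pos hqe0, show gVfun K A v q = Finsupp.single q 1 from if_pos hq]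
    · intro f hf hne
      rw [if_neg]
      intro hqf
      exact Set.disjoint_left.mp
        ((A.hS v X hX hv).2 f ((Ed.hCfin X hX).mem_toFinset.mp hf) e0 he0 hne) hqf hqe0
  · rw [show gVfun K A v q = 0 from if_neg hq]
    apply Finset.sum_eq_zero
    intro e he
    rw [if_neg]
    intro hqe
    exact hq (hsub e ((Ed.hCfin X hX).mem_toFinset.mp he) hqe)

lemma sumR_part (Y : Set Ed.G.E) (hY : Y ∈ Ed.D) (v : Ed.G.V)
    (hv : ∀ e ∈ Y, Ed.G.r e = v) (q : A.Q) :
    (∑ e ∈ (Ed.hDfin Y hY).toFinset, if q ∈ A.Re e then Finsupp.single q (1 : K) else 0) =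
      gVfun K A v q := by
  have hcov := (A.hR v Y hY hv).1
  have hsub : ∀ e ∈ Y, A.Re e ⊆ A.Qv v := by
    intro e he
    rw [hcov]
    exact Set.subset_biUnion_of_mem he
  by_cases hq : q ∈ A.Qv v
  · have hq2 : q ∈ ⋃ e ∈ Y, A.Re e := hcov ▸ hq
    obtain ⟨e0, he0, hqe0⟩ := Set.mem_iUnion₂.mp hq2
    rw [Finset.sum_eq_single_of_mem e0 ((Ed.hDfin Y hY).mem_toFinset.mpr he0)]
    · rw [if_pos hqe0, show gVfun K A v q = Finsupp.single q 1 from if_pos hq]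
    · intro f hf hne
      rw [if_neg]
      intro hqf
      exact Set.disjoint_left.mp
        ((A.hR v Y hY hv).2 f ((Ed.hDfin Y hY).mem_toFinset.mp hf) e0 he0 hne) hqf hqe0
  · rw [show gVfun K A v q = 0 from if_neg hq]
    apply Finset.sum_eq_zero
    intro e he
    rw [if_neg]
    intro hqe
    exact hq (hsub e ((Ed.hDfin Y hY).mem_toFinset.mp he) hqe)

theorem stmt_19' (K : Type) [Field K] (Ed : BisepGraph) (A : ABSObj Ed) :
    (∀ u v : Ed.G.V, tauV K A u * tauV K A v = if u = v then tauV K A u else 0) ∧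
    (∀ e : Ed.G.E,
      tauV K A (Ed.G.s e) * tauE K A e = tauE K A e ∧
      tauE K A e * tauV K A (Ed.G.r e) = tauE K A e ∧
      tauV K A (Ed.G.r e) * tauS K A e = tauS K A e ∧
      tauS K A e * tauV K A (Ed.G.s e) = tauS K A e) ∧
    (∀ (X X' : Set Ed.G.E) (hX : X ∈ Ed.C) (hX' : X' ∈ Ed.C) (v : Ed.G.V),
      (∀ e ∈ X, Ed.G.s e = v) →
      (∑ e ∈ (Ed.hCfin X hX).toFinset, ∑ f ∈ (Ed.hCfin X' hX').toFinset,
          if ∃ Y ∈ Ed.D, e ∈ Y ∧ f ∈ Y then tauE K A e * tauS K A f else 0) =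
        if X = X' then tauV K A v else 0) ∧
    (∀ (Y Y' : Set Ed.G.E) (hY : Y ∈ Ed.D) (hY' : Y' ∈ Ed.D) (v : Ed.G.V),
      (∀ e ∈ Y, Ed.G.r e = v) →
      (∑ e ∈ (Ed.hDfin Y hY).toFinset, ∑ f ∈ (Ed.hDfin Y' hY').toFinset,
          if ∃ X ∈ Ed.C, e ∈ X ∧ f ∈ X then tauS K A e * tauE K A f else 0) =
        if Y = Y' then tauV K A v else 0) := by
  refine ⟨?_, ?_, ?_, ?_⟩
  · -- σ_u σ_v = δ_uv σ_u
    intro u v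
    rw [tauV_eq, tauV_eq, op_bEnd_mul']
    by_cases huv : u = v
    · subst huv
      rw [if_pos rfl]
      refine op_bEnd_eq' fun q => ?_
      by_cases h : q ∈ A.Qv u
      · rw [show gVfun K A u q = Finsupp.single q 1 from if_pos h, bEnd_apply_single', one_smul]
        exact if_pos h
      · rw [show gVfun K A u q = 0 from if_neg h, map_zero]
    · rw [if_neg huv]
      refine Eq.trans (op_bEnd_eq' fun q => ?_) op_bEnd_zero'
      by_cases h : q ∈ A.Qv u
      · rw [show gVfun K A u q = Finsupp.single q 1 from if_pos h, bEnd_apply_single', one_smul]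
        exact if_neg fun hv => Set.disjoint_left.mp (A.disj u v huv) h hv
      · rw [show gVfun K A u q = 0 from if_neg h, map_zero]
  · -- σ_{s e} σ_e = σ_e etc.
    intro e
    refine ⟨?_, ?_, ?_, ?_⟩
    · rw [tauV_eq, tauE_eq, op_bEnd_mul']
      refine op_bEnd_eq' fun q => ?_
      by_cases h : q ∈ A.Qv (Ed.G.s e)
      · rw [show gVfun K A (Ed.G.s e) q = Finsupp.single q 1 from if_pos h,
          bEnd_apply_single', one_smul]
      · rw [show gVfun K A (Ed.G.s e) q = 0 from if_neg h, map_zero,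
          show gEfun K A e q = 0 from dif_neg fun hs => h (Se_subset A e hs)]
    · rw [tauE_eq, tauV_eq, op_bEnd_mul']
      refine op_bEnd_eq' fun q => ?_
      by_cases h : q ∈ A.Se e
      · rw [show gEfun K A e q = Finsupp.single ((A.ρ e ⟨q, h⟩ : A.Re e) : A.Q) 1
            from dif_pos h, bEnd_apply_single', one_smul]
        exact if_pos (Re_subset A e (A.ρ e ⟨q, h⟩).2)
      · rw [show gEfun K A e q = 0 from dif_neg h, map_zero]
    · rw [tauV_eq, tauS_eq, op_bEnd_mul']
      refine op_bEnd_eq' fun q => ?_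
      by_cases h : q ∈ A.Qv (Ed.G.r e)
      · rw [show gVfun K A (Ed.G.r e) q = Finsupp.single q 1 from if_pos h,
          bEnd_apply_single', one_smul]
      · rw [show gVfun K A (Ed.G.r e) q = 0 from if_neg h, map_zero,
          show gSfun K A e q = 0 from dif_neg fun hs => h (Re_subset A e hs)]
    · rw [tauS_eq, tauV_eq, op_bEnd_mul']
      refine op_bEnd_eq' fun q => ?_
      by_cases h : q ∈ A.Re e
      · rw [show gSfun K A e q = Finsupp.single (((A.ρ e).symm ⟨q, h⟩ : A.Se e) : A.Q) 1
            from dif_pos h, bEnd_apply_single', one_smul]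
        exact if_pos (Se_subset A e ((A.ρ e).symm ⟨q, h⟩).2)
      · rw [show gSfun K A e q = 0 from dif_neg h, map_zero]
  · -- CK relation for C-blocks
    intro X X' hX hX' v hv
    have key : ∀ e f : Ed.G.E,
        (if ∃ Y ∈ Ed.D, e ∈ Y ∧ f ∈ Y then tauE K A e * tauS K A f else 0) =
        MulOpposite.op (bEnd K (fun q =>
          if ∃ Y ∈ Ed.D, e ∈ Y ∧ f ∈ Y then bEnd K (gSfun K A f) (gEfun K A e q) else 0)) := by
      intro e f
      by_cases hc : ∃ Y ∈ Ed.D, e ∈ Y ∧ f ∈ Y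
      · rw [if_pos hc, tauE_eq, tauS_eq, op_bEnd_mul']
        exact op_bEnd_eq' fun q => (if_pos hc).symm
      · rw [if_neg hc,
          show (fun q : A.Q => if ∃ Y ∈ Ed.D, e ∈ Y ∧ f ∈ Y then
              bEnd K (gSfun K A f) (gEfun K A e q) else 0) = fun _ => 0
            from funext fun q => if_neg hc]
        exact op_bEnd_zero'.symm
    have hLHS : (∑ e ∈ (Ed.hCfin X hX).toFinset, ∑ f ∈ (Ed.hCfin X' hX').toFinset,
          if ∃ Y ∈ Ed.D, e ∈ Y ∧ f ∈ Y then tauE K A e * tauS K A f else 0) =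
        MulOpposite.op (bEnd K (fun q =>
          ∑ e ∈ (Ed.hCfin X hX).toFinset, ∑ f ∈ (Ed.hCfin X' hX').toFinset,
            if ∃ Y ∈ Ed.D, e ∈ Y ∧ f ∈ Y then bEnd K (gSfun K A f) (gEfun K A e q) else 0)) := by
      rw [Finset.sum_congr rfl fun e _ => Finset.sum_congr rfl fun f _ => key e f]
      rw [Finset.sum_congr rfl fun e _ => op_bEnd_sum' (Ed.hCfin X' hX').toFinset _]
      exact op_bEnd_sum' _ _
    rw [hLHS]
    by_cases hXX : X = X'
    · subst hXX
      rw [if_pos rfl, tauV_eq]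
      refine op_bEnd_eq' fun q => ?_
      have hdiag : ∀ e ∈ (Ed.hCfin X hX).toFinset,
          (∑ f ∈ (Ed.hCfin X hX').toFinset,
            if ∃ Y ∈ Ed.D, e ∈ Y ∧ f ∈ Y then bEnd K (gSfun K A f) (gEfun K A e q) else 0) =
          (if q ∈ A.Se e then Finsupp.single q 1 else 0) := by
        intro e he
        rw [Finset.sum_eq_single_of_mem e he]
        · obtain ⟨Y, ⟨hY, heY⟩, -⟩ := Ed.hDpart e
          rw [if_pos ⟨Y, hY, heY, heY⟩, gES_diag]
        · intro f _ hne
          by_cases hc : ∃ Y ∈ Ed.D, e ∈ Y ∧ f ∈ Y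
          · rw [if_pos hc]
            exact gES_off K A e f (Ne.symm hne) hc q
          · exact if_neg hc
      rw [Finset.sum_congr rfl hdiag]
      exact sumS_part K A X hX v hv q
    · rw [if_neg hXX]
      refine Eq.trans (op_bEnd_eq' fun q => ?_) op_bEnd_zero'
      apply Finset.sum_eq_zero
      intro e he
      apply Finset.sum_eq_zero
      intro f hf
      by_cases hc : ∃ Y ∈ Ed.D, e ∈ Y ∧ f ∈ Y
      · rw [if_pos hc]
        have hne : e ≠ f := by
          rintro rfl
          obtain ⟨Z, -, hZu⟩ := Ed.hCpart e
          exact hXX ((hZu X ⟨hX, (Ed.hCfin X hX).mem_toFinset.mp he⟩).trans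
            (hZu X' ⟨hX', (Ed.hCfin X' hX').mem_toFinset.mp hf⟩).symm)
        exact gES_off K A e f hne hc q
      · exact if_neg hc
  · -- CK relation for D-blocks
    intro Y Y' hY hY' v hv
    have key : ∀ e f : Ed.G.E,
        (if ∃ X ∈ Ed.C, e ∈ X ∧ f ∈ X then tauS K A e * tauE K A f else 0) =
        MulOpposite.op (bEnd K (fun q =>
          if ∃ X ∈ Ed.C, e ∈ X ∧ f ∈ X then bEnd K (gEfun K A f) (gSfun K A e q) else 0)) := by
      intro e f
      by_cases hc : ∃ X ∈ Ed.C, e ∈ X ∧ f ∈ X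
      · rw [if_pos hc, tauS_eq, tauE_eq, op_bEnd_mul']
        exact op_bEnd_eq' fun q => (if_pos hc).symm
      · rw [if_neg hc,
          show (fun q : A.Q => if ∃ X ∈ Ed.C, e ∈ X ∧ f ∈ X then
              bEnd K (gEfun K A f) (gSfun K A e q) else 0) = fun _ => 0
            from funext fun q => if_neg hc]
        exact op_bEnd_zero'.symm
    have hLHS : (∑ e ∈ (Ed.hDfin Y hY).toFinset, ∑ f ∈ (Ed.hDfin Y' hY').toFinset,
          if ∃ X ∈ Ed.C, e ∈ X ∧ f ∈ X then tauS K A e * tauE K A f else 0) =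
        MulOpposite.op (bEnd K (fun q =>
          ∑ e ∈ (Ed.hDfin Y hY).toFinset, ∑ f ∈ (Ed.hDfin Y' hY').toFinset,
            if ∃ X ∈ Ed.C, e ∈ X ∧ f ∈ X then bEnd K (gEfun K A f) (gSfun K A e q) else 0)) := by
      rw [Finset.sum_congr rfl fun e _ => Finset.sum_congr rfl fun f _ => key e f]
      rw [Finset.sum_congr rfl fun e _ => op_bEnd_sum' (Ed.hDfin Y' hY').toFinset _]
      exact op_bEnd_sum' _ _
    rw [hLHS]
    by_cases hYY : Y = Y'
    · subst hYY
      rw [if_pos rfl, tauV_eq]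
      refine op_bEnd_eq' fun q => ?_
      have hdiag : ∀ e ∈ (Ed.hDfin Y hY).toFinset,
          (∑ f ∈ (Ed.hDfin Y hY').toFinset,
            if ∃ X ∈ Ed.C, e ∈ X ∧ f ∈ X then bEnd K (gEfun K A f) (gSfun K A e q) else 0) =
          (if q ∈ A.Re e then Finsupp.single q 1 else 0) := by
        intro e he
        rw [Finset.sum_eq_single_of_mem e he]
        · obtain ⟨Z, ⟨hZ, heZ⟩, -⟩ := Ed.hCpart e
          rw [if_pos ⟨Z, hZ, heZ, heZ⟩, gSE_diag]
        · intro f _ hne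
          by_cases hc : ∃ X ∈ Ed.C, e ∈ X ∧ f ∈ X
          · rw [if_pos hc]
            exact gSE_off K A e f (Ne.symm hne) hc q
          · exact if_neg hc
      rw [Finset.sum_congr rfl hdiag]
      exact sumR_part K A Y hY v hv q
    · rw [if_neg hYY]
      refine Eq.trans (op_bEnd_eq' fun q => ?_) op_bEnd_zero'
      apply Finset.sum_eq_zero
      intro e he
      apply Finset.sum_eq_zero
      intro f hf
      by_cases hc : ∃ X ∈ Ed.C, e ∈ X ∧ f ∈ X
      · rw [if_pos hc]
        have hne : e ≠ f := by
          rintro rfl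
          obtain ⟨Z, -, hZu⟩ := Ed.hDpart e
          exact hYY ((hZu Y ⟨hY, (Ed.hDfin Y hY).mem_toFinset.mp he⟩).trans
            (hZu Y' ⟨hY', (Ed.hDfin Y' hY').mem_toFinset.mp hf⟩).symm)
        exact gSE_off K A e f hne hc q
      · exact if_neg hc


/-- Theorem (Section 6.1): the operators `σ_v, σ_e, σ_{e*}` attached to an
`Ė`-algebraic branching system form an `Ė`-family in `(End_K W)ᵒᵖ`. -/
theorem stmt_19 (K : Type) [Field K] (Ed : BisepGraph) (A : ABSObj Ed) :
    (∀ u v : Ed.G.V, tauV K A u * tauV K A v = if u = v then tauV K A u else 0) ∧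
    (∀ e : Ed.G.E,
      tauV K A (Ed.G.s e) * tauE K A e = tauE K A e ∧
      tauE K A e * tauV K A (Ed.G.r e) = tauE K A e ∧
      tauV K A (Ed.G.r e) * tauS K A e = tauS K A e ∧
      tauS K A e * tauV K A (Ed.G.s e) = tauS K A e) ∧
    (∀ (X X' : Set Ed.G.E) (hX : X ∈ Ed.C) (hX' : X' ∈ Ed.C) (v : Ed.G.V),
      (∀ e ∈ X, Ed.G.s e = v) →
      (∑ e ∈ (Ed.hCfin X hX).toFinset, ∑ f ∈ (Ed.hCfin X' hX').toFinset,
          if ∃ Y ∈ Ed.D, e ∈ Y ∧ f ∈ Y then tauE K A e * tauS K A f else 0) =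
        if X = X' then tauV K A v else 0) ∧
    (∀ (Y Y' : Set Ed.G.E) (hY : Y ∈ Ed.D) (hY' : Y' ∈ Ed.D) (v : Ed.G.V),
      (∀ e ∈ Y, Ed.G.r e = v) →
      (∑ e ∈ (Ed.hDfin Y hY).toFinset, ∑ f ∈ (Ed.hDfin Y' hY').toFinset,
          if ∃ X ∈ Ed.C, e ∈ X ∧ f ∈ X then tauS K A e * tauE K A f else 0) =
        if Y = Y' then tauV K A v else 0) :=
  stmt_19' K Ed A

end
end
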